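/- Suppose A − cλ_i BK is Hurwitz for all nonzero eigenvalues λ_i (i = 2,…,N) of the Laplacian L of a graph with spanning tree (so 0 is a simple eigenvalue of L with right eigenvector 1_N and normalized left eigenvector w). Then for any initial state x(0), the solution of ẋ = (I_N ⊗ A − cL ⊗ BK)x satisfies x(t) − (1_N wᵀ ⊗ e^{At})x(0) → 0 as t → ∞, i.e., agents reach consensus on (wᵀ ⊗ e^{At})x(0). -/

import Mathlib

open Matrix Kronecker Filter

namespace Stmt17Aux


theorem sub_kron {α l m n p : Type*} [CommRing α] (A B : Matrix l m α) (C : Matrix n p α) :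
    (A - B) ⊗ₖ C = A ⊗ₖ C - B ⊗ₖ C := by
  ext ⟨i, j⟩ ⟨k, l'⟩
  simp [Matrix.kroneckerMap_apply, sub_mul]

theorem kron_sub {α l m n p : Type*} [CommRing α] (A : Matrix l m α) (B C : Matrix n p α) :
    A ⊗ₖ (B - C) = A ⊗ₖ B - A ⊗ₖ C := by
  ext ⟨i, j⟩ ⟨k, l'⟩
  simp [Matrix.kroneckerMap_apply, mul_sub]

theorem kron_pow_left' {α : Type*} [CommRing α] {N n : Type*} [Fintype N] [Fintype n]
    [DecidableEq N] [DecidableEq n] (X : Matrix N N α) (b : ℕ) :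
    (X ⊗ₖ (1 : Matrix n n α)) ^ b = (X ^ b) ⊗ₖ (1 : Matrix n n α) := by
  induction b with
  | zero => simp [Matrix.one_kronecker_one]
  | succ b ih => rw [pow_succ, pow_succ, ih, ← Matrix.mul_kronecker_mul, Matrix.one_mul]

theorem kron_pow_right' {α : Type*} [CommRing α] {N n : Type*} [Fintype N] [Fintype n]
    [DecidableEq N] [DecidableEq n] (X : Matrix n n α) (b : ℕ) :
    ((1 : Matrix N N α) ⊗ₖ X) ^ b = (1 : Matrix N N α) ⊗ₖ (X ^ b) := by
  induction b with
  | zero => simp [Matrix.one_kronecker_one]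
  | succ b ih => rw [pow_succ, pow_succ, ih, ← Matrix.mul_kronecker_mul, Matrix.one_mul]

theorem kron_mulVec {α : Type*} [CommRing α] {N n : Type*} [Fintype N] [Fintype n]
    (X : Matrix N N α) (Y : Matrix n n α) (u : N × n → α) (i : N) (j : n) :
    ((X ⊗ₖ Y) *ᵥ u) (i, j) = ∑ k, ∑ l, X i k * Y j l * u (k, l) := by
  simp [Matrix.mulVec, dotProduct, Fintype.sum_prod_type, Matrix.kroneckerMap_apply]

theorem kron_one_mulVec {α : Type*} [CommRing α] {N n : Type*} [Fintype N] [Fintype n]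
    [DecidableEq n] (X : Matrix N N α) (u : N × n → α) (i : N) (j : n) :
    ((X ⊗ₖ (1 : Matrix n n α)) *ᵥ u) (i, j) = ∑ k, X i k * u (k, j) := by
  rw [kron_mulVec]
  refine Finset.sum_congr rfl fun k _ => ?_
  simp [Matrix.one_apply, mul_ite, ite_mul, Finset.sum_ite_eq]

theorem mulVec_sub' {α : Type*} [CommRing α] {d e : Type*} [Fintype e]
    (X : Matrix d e α) (u v : e → α) : X *ᵥ (u - v) = X *ᵥ u - X *ᵥ v := by
  funext i
  simp [Matrix.mulVec, dotProduct, mul_sub, Finset.sum_sub_distrib]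

/-- Convert generalized eigenvector membership (endomorphism form) to matrix form. -/
theorem genEig_matrix {d : Type*} [Fintype d] [DecidableEq d] (X : Matrix d d ℂ) (μ : ℂ)
    (x : d → ℂ) (hx : x ∈ (Module.End.genEigenspace (Matrix.toLinAlgEquiv' X) μ) ⊤) :
    ∃ a : ℕ, ((X - μ • 1) ^ a) *ᵥ x = 0 := by
  obtain ⟨l, -, hl⟩ := Module.End.mem_genEigenspace.mp hx
  refine ⟨l, ?_⟩
  rw [LinearMap.mem_ker] at hl
  have h1 : Matrix.toLinAlgEquiv' ((X - μ • 1) ^ l) = ((Matrix.toLinAlgEquiv' X) - μ • 1) ^ l := by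
    rw [map_pow]
    congr 1
    rw [map_sub]
    congr 1
    rw [← Algebra.algebraMap_eq_smul_one, AlgEquiv.commutes, Algebra.algebraMap_eq_smul_one]
  have h2 := congrArg (fun φ => φ x) h1
  simp only [Matrix.toLinAlgEquiv'_apply] at h2
  rw [h2, hl]


/-- `X ↦ X *ᵥ v` as a linear map. -/
noncomputable def mulVecL {d : Type*} [Fintype d] (v : d → ℂ) :
    Matrix d d ℂ →ₗ[ℂ] (d → ℂ) where
  toFun X := X *ᵥ v
  map_add' X Y := Matrix.add_mulVec X Y v
  map_smul' z X := Matrix.smul_mulVec z X v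

theorem auxTendsto {d : Type*} [Fintype d] [DecidableEq d] (M : Matrix d d ℂ) (μ : ℂ)
    (hμ : μ.re < 0) (a : ℕ) (v : d → ℂ) (hv : ((M - μ • 1) ^ a) *ᵥ v = 0) :
    Tendsto (fun t : ℝ => NormedSpace.exp (t • M) *ᵥ v) atTop (nhds 0) := by
  letI : SeminormedRing (Matrix d d ℂ) := Matrix.linftyOpSemiNormedRing
  letI : NormedRing (Matrix d d ℂ) := Matrix.linftyOpNormedRing
  letI : NormedAlgebra ℝ (Matrix d d ℂ) := Matrix.linftyOpNormedAlgebra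
  letI : NormedAlgebra ℂ (Matrix d d ℂ) := Matrix.linftyOpNormedAlgebra
  set Nm : Matrix d d ℂ := M - μ • 1 with hNm
  have key : ∀ t : ℝ, NormedSpace.exp (t • M) *ᵥ v =
      ∑ k ∈ Finset.range a,
        (Complex.exp (t * μ) * t ^ k * ((k.factorial : ℂ))⁻¹) • (Nm ^ k *ᵥ v) := by
    intro t
    have hsplit : t • M = ((t : ℂ) * μ) • (1 : Matrix d d ℂ) + t • Nm := by
      have h0 : t • (μ • (1 : Matrix d d ℂ)) = ((t : ℂ) * μ) • (1 : Matrix d d ℂ) := by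
        rw [← smul_assoc, Complex.real_smul]
      rw [← h0, ← smul_add, hNm]
      congr 1
      abel
    have hcomm : Commute (((t : ℂ) * μ) • (1 : Matrix d d ℂ)) ((t : ℝ) • Nm) :=
      (Commute.one_left _).smul_left _
    have hexp :
        NormedSpace.exp (t • M) =
          Complex.exp (t * μ) • NormedSpace.exp ((t : ℝ) • Nm) := by
      rw [hsplit, Matrix.exp_add_of_commute _ _ hcomm]
      have h1 : (((t : ℂ) * μ) • (1 : Matrix d d ℂ)) =
          algebraMap ℂ (Matrix d d ℂ) ((t : ℂ) * μ) := by
        rw [Algebra.algebraMap_eq_smul_one]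
      rw [h1]
      erw [← NormedSpace.algebraMap_exp_comm (𝕂 := ℂ) (𝔸 := Matrix d d ℂ)]
      rw [Algebra.algebraMap_eq_smul_one,
        ← Complex.exp_eq_exp_ℂ]
      rw [smul_mul_assoc, one_mul]

    rw [hexp, Matrix.smul_mulVec]
    have hser : NormedSpace.exp ((t : ℝ) • Nm) *ᵥ v =
        ∑' k : ℕ, (((k.factorial : ℝ))⁻¹ • ((t : ℝ) • Nm) ^ k) *ᵥ v := by
      rw [NormedSpace.exp_eq_tsum ℝ]
      exact ((mulVecL v).restrictScalars ℝ |>.toContinuousLinearMap).map_tsum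
        (NormedSpace.expSeries_summable' (𝕂 := ℝ) ((t : ℝ) • Nm))
    rw [hser]
    have hterm : ∀ k : ℕ, (((k.factorial : ℝ))⁻¹ • ((t : ℝ) • Nm) ^ k) *ᵥ v =
        (((t : ℂ) ^ k * ((k.factorial : ℂ))⁻¹)) • (Nm ^ k *ᵥ v) := by
      intro k
      rw [smul_pow, smul_comm, Matrix.smul_mulVec, Matrix.smul_mulVec]
      rw [← Complex.coe_smul, ← Complex.coe_smul]
      push_cast
      rw [smul_smul]
    have hvanish : ∀ k ∉ Finset.range a,
        (((k.factorial : ℝ))⁻¹ • ((t : ℝ) • Nm) ^ k) *ᵥ v = 0 := by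
      intro k hk
      rw [Finset.mem_range, not_lt] at hk
      rw [hterm k]
      have : Nm ^ k *ᵥ v = 0 := by
        have : Nm ^ k = Nm ^ (k - a) * Nm ^ a := by
          rw [← pow_add]; congr 1; omega
        rw [this, ← Matrix.mulVec_mulVec, hv, Matrix.mulVec_zero]
      rw [this, smul_zero]
    rw [tsum_eq_sum hvanish, Finset.smul_sum]
    refine Finset.sum_congr rfl fun k _ => ?_
    rw [hterm k, smul_smul]
    ring_nf
  simp only [key]
  have hsum : Tendsto (fun t : ℝ => ∑ k ∈ Finset.range a,
      (Complex.exp (t * μ) * t ^ k * ((k.factorial : ℂ))⁻¹) • (Nm ^ k *ᵥ v)) atTop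
      (nhds (∑ _k ∈ Finset.range a, (0 : d → ℂ))) := by
    refine tendsto_finset_sum _ fun k _ => ?_
    have hcoef : Tendsto (fun t : ℝ => Complex.exp (t * μ) * (t : ℂ) ^ k *
        ((k.factorial : ℂ))⁻¹) atTop (nhds 0) := by
      rw [tendsto_zero_iff_norm_tendsto_zero]
      have heq : ∀ᶠ t : ℝ in atTop,
          ‖Complex.exp (t * μ) * (t : ℂ) ^ k * ((k.factorial : ℂ))⁻¹‖ =
            ((k.factorial : ℝ))⁻¹ * ((-μ.re) ^ k)⁻¹ *
              (((-μ.re) * t) ^ k * Real.exp (-((-μ.re) * t))) := by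
        filter_upwards [eventually_ge_atTop (0 : ℝ)] with t ht
        rw [norm_mul, norm_mul, Complex.norm_exp]
        have h1 : ((t : ℂ) * μ).re = t * μ.re := by simp
        rw [h1, norm_pow, Complex.norm_real, Real.norm_of_nonneg ht]
        rw [norm_inv, Complex.norm_natCast]
        have h3 : -(-μ.re * t) = t * μ.re := by ring
        rw [h3, mul_pow]
        have hμ' : (-μ.re) ^ k ≠ 0 := pow_ne_zero _ (by linarith)
        field_simp
      rw [tendsto_congr' heq]
      have hcomp : Tendsto (fun t : ℝ => (-μ.re) * t) atTop atTop :=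
        Tendsto.const_mul_atTop (by linarith) tendsto_id
      have h4 := (Real.tendsto_pow_mul_exp_neg_atTop_nhds_zero k).comp hcomp
      have h0 := h4.const_mul (((k.factorial : ℝ))⁻¹ * ((-μ.re) ^ k)⁻¹)
      simpa [Function.comp, mul_comm] using h0
    simpa using hcoef.smul_const (Nm ^ k *ᵥ v)
  simpa using hsum



theorem kron_pow_left {α : Type*} [CommRing α] {N n : Type*} [Fintype N] [Fintype n]
    [DecidableEq N] [DecidableEq n] (X : Matrix N N α) (b : ℕ) :
    (X ⊗ₖ (1 : Matrix n n α)) ^ b = (X ^ b) ⊗ₖ (1 : Matrix n n α) := by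
  induction b with
  | zero => simp [Matrix.one_kronecker_one]
  | succ b ih => rw [pow_succ, pow_succ, ih, ← Matrix.mul_kronecker_mul, Matrix.one_mul]

theorem kron_pow_right {α : Type*} [CommRing α] {N n : Type*} [Fintype N] [Fintype n]
    [DecidableEq N] [DecidableEq n] (X : Matrix n n α) (b : ℕ) :
    ((1 : Matrix N N α) ⊗ₖ X) ^ b = (1 : Matrix N N α) ⊗ₖ (X ^ b) := by
  induction b with
  | zero => simp [Matrix.one_kronecker_one]
  | succ b ih => rw [pow_succ, pow_succ, ih, ← Matrix.mul_kronecker_mul, Matrix.one_mul]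


/-- `X ↦ W ⊗ₖ X` as a linear map. -/
def kronL {α : Type*} [CommRing α] {N n : Type*} (W : Matrix N N α) :
    Matrix n n α →ₗ[α] Matrix (N × n) (N × n) α where
  toFun X := W ⊗ₖ X
  map_add' X Y := Matrix.kronecker_add W X Y
  map_smul' r X := Matrix.kronecker_smul r W X

theorem expMul_kron {N n : ℕ} (A : Matrix (Fin n) (Fin n) ℝ) (BK : Matrix (Fin n) (Fin n) ℝ)
    (c : ℝ) (L W : Matrix (Fin N) (Fin N) ℝ) (hLW : L * W = 0) (t : ℝ) :
    NormedSpace.exp (t • ((1 : Matrix (Fin N) (Fin N) ℝ) ⊗ₖ A - c • (L ⊗ₖ BK))) *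
        (W ⊗ₖ (1 : Matrix (Fin n) (Fin n) ℝ))
      = W ⊗ₖ NormedSpace.exp (t • A) := by
  letI : SeminormedRing (Matrix (Fin N × Fin n) (Fin N × Fin n) ℝ) :=
    Matrix.linftyOpSemiNormedRing
  letI : NormedRing (Matrix (Fin N × Fin n) (Fin N × Fin n) ℝ) := Matrix.linftyOpNormedRing
  letI : NormedAlgebra ℝ (Matrix (Fin N × Fin n) (Fin N × Fin n) ℝ) :=
    Matrix.linftyOpNormedAlgebra
  letI : SeminormedRing (Matrix (Fin n) (Fin n) ℝ) := Matrix.linftyOpSemiNormedRing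
  letI : NormedRing (Matrix (Fin n) (Fin n) ℝ) := Matrix.linftyOpNormedRing
  letI : NormedAlgebra ℝ (Matrix (Fin n) (Fin n) ℝ) := Matrix.linftyOpNormedAlgebra
  set M : Matrix (Fin N × Fin n) (Fin N × Fin n) ℝ :=
    (1 : Matrix (Fin N) (Fin N) ℝ) ⊗ₖ A - c • (L ⊗ₖ BK) with hMdef
  have hM : t • M = (1 : Matrix (Fin N) (Fin N) ℝ) ⊗ₖ (t • A) - (c * t) • (L ⊗ₖ BK) := by
    rw [hMdef, smul_sub, Matrix.kronecker_smul, smul_smul, mul_comm]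
  have hpow : ∀ k : ℕ, (t • M) ^ k * (W ⊗ₖ (1 : Matrix (Fin n) (Fin n) ℝ)) =
      W ⊗ₖ ((t • A) ^ k) := by
    intro k
    induction k with
    | zero => simp [Matrix.one_kronecker_one]
    | succ k ih =>
      rw [pow_succ', mul_assoc, ih, hM, sub_mul, smul_mul_assoc,
        ← Matrix.mul_kronecker_mul, ← Matrix.mul_kronecker_mul, hLW,
        Matrix.zero_kronecker, smul_zero, sub_zero, Matrix.one_mul, ← pow_succ']
  have hΦ := (((LinearMap.mulRight ℝ
      (W ⊗ₖ (1 : Matrix (Fin n) (Fin n) ℝ)))).toContinuousLinearMap).map_tsum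
    (NormedSpace.expSeries_summable' (𝕂 := ℝ) (t • M))
  rw [NormedSpace.exp_eq_tsum ℝ]
  have h1 : (∑' k : ℕ, ((k.factorial : ℝ))⁻¹ • (t • M) ^ k) *
      (W ⊗ₖ (1 : Matrix (Fin n) (Fin n) ℝ)) =
      ∑' k : ℕ, ((k.factorial : ℝ))⁻¹ • ((t • M) ^ k * (W ⊗ₖ (1 : Matrix (Fin n) (Fin n) ℝ))) := by
    simpa [LinearMap.mulRight_apply, smul_mul_assoc] using hΦ
  rw [h1]
  have h2 : ∀ k : ℕ, ((k.factorial : ℝ))⁻¹ •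
      ((t • M) ^ k * (W ⊗ₖ (1 : Matrix (Fin n) (Fin n) ℝ))) =
      (kronL W) (((k.factorial : ℝ))⁻¹ • (t • A) ^ k) := by
    intro k
    rw [hpow k]
    simp only [kronL, LinearMap.coe_mk, AddHom.coe_mk]
    rw [Matrix.kronecker_smul]
  rw [tsum_congr h2]
  have hΨ := (((kronL (n := Fin n) W).toContinuousLinearMap).map_tsum
    (NormedSpace.expSeries_summable' (𝕂 := ℝ) (t • A))).symm
  simpa [NormedSpace.exp_eq_tsum ℝ, kronL] using hΨ


set_option maxHeartbeats 1000000 in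
theorem mainComplex {N n : ℕ} (hN : 0 < N)
    (Ac BKc : Matrix (Fin n) (Fin n) ℂ) (c : ℝ)
    (Lc : Matrix (Fin N) (Fin N) ℂ) (wc : Fin N → ℂ)
    (hrowc : Lc *ᵥ (fun _ => (1 : ℂ)) = 0)
    (hwc : wc ᵥ* Lc = 0)
    (hnormc : ∑ i, wc i = 1)
    (hker : ∀ v : Fin N → ℂ, Lc *ᵥ v = 0 → ∃ z : ℂ, v = fun _ => z)
    (hH : ∀ μ ∈ spectrum ℂ Lc, μ ≠ 0 → ∀ z ∈ spectrum ℂ (Ac - ((c : ℂ) * μ) • BKc), z.re < 0)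
    (y : Fin N × Fin n → ℂ)
    (hy : ((Matrix.of fun (_ : Fin N) (j : Fin N) => wc j) ⊗ₖ
        (1 : Matrix (Fin n) (Fin n) ℂ)) *ᵥ y = 0) :
    Tendsto (fun t : ℝ =>
      NormedSpace.exp
        (t • ((1 : Matrix (Fin N) (Fin N) ℂ) ⊗ₖ Ac - (c : ℂ) • (Lc ⊗ₖ BKc))) *ᵥ y)
      atTop (nhds 0) := by
  classical
  set Wc : Matrix (Fin N) (Fin N) ℂ := Matrix.of fun _ j => wc j with hWcdef
  set Mc : Matrix (Fin N × Fin n) (Fin N × Fin n) ℂ :=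
    (1 : Matrix (Fin N) (Fin N) ℂ) ⊗ₖ Ac - (c : ℂ) • (Lc ⊗ₖ BKc) with hMcdef
  set P : Matrix (Fin N × Fin n) (Fin N × Fin n) ℂ :=
    Wc ⊗ₖ (1 : Matrix (Fin n) (Fin n) ℂ) with hPdef
  set Lk : Matrix (Fin N × Fin n) (Fin N × Fin n) ℂ :=
    Lc ⊗ₖ (1 : Matrix (Fin n) (Fin n) ℂ) with hLkdef
  -- basic matrix identities
  have hWL : Wc * Lc = 0 := by
    ext i j
    have := congr_fun hwc j
    simpa [Matrix.mul_apply, Matrix.vecMul, dotProduct, hWcdef] using this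
  have hLW : Lc * Wc = 0 := by
    ext i j
    have := congr_fun hrowc i
    simp only [Matrix.mulVec, dotProduct, mul_one] at this
    simp [Matrix.mul_apply, hWcdef, ← Finset.sum_mul, this]
  have hPM : P * Mc = Mc * P := by
    have h1 : P * ((1 : Matrix (Fin N) (Fin N) ℂ) ⊗ₖ Ac) = Wc ⊗ₖ Ac := by
      rw [hPdef, ← Matrix.mul_kronecker_mul, Matrix.mul_one, Matrix.one_mul]
    have h2 : ((1 : Matrix (Fin N) (Fin N) ℂ) ⊗ₖ Ac) * P = Wc ⊗ₖ Ac := by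
      rw [hPdef, ← Matrix.mul_kronecker_mul, Matrix.one_mul, Matrix.mul_one]
    have h3 : P * (Lc ⊗ₖ BKc) = 0 := by
      rw [hPdef, ← Matrix.mul_kronecker_mul, hWL, Matrix.zero_kronecker]
    have h4 : (Lc ⊗ₖ BKc) * P = 0 := by
      rw [hPdef, ← Matrix.mul_kronecker_mul, hLW, Matrix.zero_kronecker]
    rw [hMcdef, Matrix.mul_sub, Matrix.sub_mul, mul_smul_comm, smul_mul_assoc,
      h1, h2, h3, h4]
  have hLkM : Lk * Mc = Mc * Lk := by
    have h1 : Lk * ((1 : Matrix (Fin N) (Fin N) ℂ) ⊗ₖ Ac) = Lc ⊗ₖ Ac := by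
      rw [hLkdef, ← Matrix.mul_kronecker_mul, Matrix.mul_one, Matrix.one_mul]
    have h2 : ((1 : Matrix (Fin N) (Fin N) ℂ) ⊗ₖ Ac) * Lk = Lc ⊗ₖ Ac := by
      rw [hLkdef, ← Matrix.mul_kronecker_mul, Matrix.one_mul, Matrix.mul_one]
    have h3 : Lk * (Lc ⊗ₖ BKc) = (Lc * Lc) ⊗ₖ BKc := by
      rw [hLkdef, ← Matrix.mul_kronecker_mul, Matrix.one_mul]
    have h4 : (Lc ⊗ₖ BKc) * Lk = (Lc * Lc) ⊗ₖ BKc := by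
      rw [hLkdef, ← Matrix.mul_kronecker_mul, Matrix.mul_one]
    rw [hMcdef, Matrix.mul_sub, Matrix.sub_mul, mul_smul_comm, smul_mul_assoc,
      h1, h2, h3, h4]
  have hPLk : P * Lk = 0 := by
    rw [hPdef, hLkdef, ← Matrix.mul_kronecker_mul, hWL, Matrix.one_mul,
      Matrix.zero_kronecker]
  -- endomorphisms
  set f : Module.End ℂ (Fin N × Fin n → ℂ) := Matrix.toLinAlgEquiv' Mc with hfdef
  set g : Module.End ℂ (Fin N × Fin n → ℂ) := Matrix.toLinAlgEquiv' Lk with hgdef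
  set eP : Module.End ℂ (Fin N × Fin n → ℂ) := Matrix.toLinAlgEquiv' P with hePdef
  set pP : Submodule ℂ (Fin N × Fin n → ℂ) := LinearMap.ker eP with hpPdef
  have hyP : y ∈ pP := by
    rw [hpPdef, LinearMap.mem_ker, hePdef, Matrix.toLinAlgEquiv'_apply]
    exact hy
  have hInv : ∀ x ∈ pP, f x ∈ pP := by
    intro x hx
    have hx' : eP x = 0 := hx
    show eP (f x) = 0
    rw [hfdef, hePdef, ← Module.End.mul_apply, ← _root_.map_mul, hPM, _root_.map_mul,
      Module.End.mul_apply, ← hePdef, ← hfdef, hx', map_zero]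
  have htopf : ⨆ μ, (Module.End.genEigenspace f μ) ⊤ = ⊤ :=
    Module.End.iSup_maxGenEigenspace_eq_top f
  have htopg : ⨆ μ, (Module.End.genEigenspace g μ) ⊤ = ⊤ :=
    Module.End.iSup_maxGenEigenspace_eq_top g
  -- spectral localization
  have hloc : ∀ (μ : ℂ) (u : Fin N × Fin n → ℂ),
      u ∈ pP ⊓ (Module.End.genEigenspace f μ) ⊤ → u ≠ 0 → μ.re < 0 := by
    intro μ u hu hu0
    set p' : Submodule ℂ (Fin N × Fin n → ℂ) := pP ⊓ (Module.End.genEigenspace f μ) ⊤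
      with hp'def
    have hfg : Commute f g := by
      rw [Commute, SemiconjBy, hfdef, hgdef, ← _root_.map_mul, ← _root_.map_mul, ← hLkM]
    have hp'inv : ∀ x ∈ p', g x ∈ p' := by
      intro x hx
      obtain ⟨hx1, hx2⟩ := Submodule.mem_inf.mp hx
      rw [hp'def, Submodule.mem_inf]
      constructor
      · show eP (g x) = 0
        rw [hgdef, hePdef, ← Module.End.mul_apply, ← _root_.map_mul, hPLk, map_zero,
          LinearMap.zero_apply]
      · exact SetLike.mem_coe.mp
          (Module.End.mapsTo_genEigenspace_of_comm hfg μ ⊤ (SetLike.mem_coe.mpr hx2))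
    have hdec2 := Submodule.eq_iSup_inf_genEigenspace (p := p') (f := g) ⊤ hp'inv htopg
    have hp'ne : p' ≠ ⊥ := by
      intro h
      exact hu0 (by simpa [h] using (hp'def ▸ hu : u ∈ p'))
    obtain ⟨lam, hne⟩ : ∃ lam : ℂ, p' ⊓ (Module.End.genEigenspace g lam) ⊤ ≠ ⊥ := by
      by_contra h
      push_neg at h
      apply hp'ne
      rw [hdec2]
      simp [h]
    obtain ⟨u', hu'mem, hu'0⟩ := Submodule.ne_bot_iff _ |>.mp hne
    obtain ⟨hu'p', hu'g⟩ := Submodule.mem_inf.mp hu'mem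
    obtain ⟨hu'P, hu'f⟩ := Submodule.mem_inf.mp (hp'def ▸ hu'p')
    obtain ⟨a, ha⟩ := genEig_matrix Mc μ u' hu'f
    obtain ⟨b, hb0⟩ := genEig_matrix Lk lam u' hu'g
    have hG : Lk - lam • (1 : Matrix (Fin N × Fin n) (Fin N × Fin n) ℂ)
        = (Lc - lam • 1) ⊗ₖ (1 : Matrix (Fin n) (Fin n) ℂ) := by
      rw [sub_kron, Matrix.smul_kronecker, hLkdef, Matrix.one_kronecker_one]
    have hb : (((Lc - lam • 1) ^ b) ⊗ₖ (1 : Matrix (Fin n) (Fin n) ℂ)) *ᵥ u' = 0 := by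
      rw [← kron_pow_left', ← hG]
      exact hb0
    have hu'Pv : P *ᵥ u' = 0 := by
      have h := (LinearMap.mem_ker.mp hu'P : eP u' = 0)
      rw [hePdef, Matrix.toLinAlgEquiv'_apply] at h
      exact h
    by_cases hlam : lam = 0
    · -- contradiction: u' = 0
      exfalso
      subst hlam
      simp only [zero_smul, sub_zero] at hb
      -- columns of u' are generalized 0-eigenvectors of Lc
      have hcol : ∀ j : Fin n, Lc ^ b *ᵥ (fun k => u' (k, j)) = 0 := by
        intro j
        funext i
        have := congr_fun hb (i, j)
        rw [kron_one_mulVec] at this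
        simpa [Matrix.mulVec, dotProduct] using this
      have hgen0 : ∀ (b' : ℕ) (v : Fin N → ℂ), Lc ^ b' *ᵥ v = 0 → ∃ z : ℂ, v = fun _ => z := by
        intro b'
        induction b' with
        | zero =>
          intro v hv
          refine ⟨0, ?_⟩
          exact (by simpa [Matrix.one_mulVec] using hv : v = 0)
        | succ b' ih =>
          intro v hv
          have h1 : Lc ^ b' *ᵥ (Lc *ᵥ v) = 0 := by
            rw [Matrix.mulVec_mulVec, ← pow_succ]
            exact hv
          obtain ⟨z, hz⟩ := ih _ h1
          have hz0 : z = 0 := by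
            have h2 : wc ⬝ᵥ (Lc *ᵥ v) = 0 := by
              rw [Matrix.dotProduct_mulVec, hwc, zero_dotProduct]
            rw [hz] at h2
            simpa [dotProduct, ← Finset.sum_mul, hnormc] using h2
          have : Lc *ᵥ v = 0 := by
            rw [hz, hz0]
            rfl
          exact hker v this
      have hcolz : ∀ j : Fin n, ∃ z : ℂ, (fun k => u' (k, j)) = fun _ => z :=
        fun j => hgen0 b _ (hcol j)
      apply hu'0
      funext kj
      obtain ⟨k, j⟩ := kj
      obtain ⟨z, hz⟩ := hcolz j
      have hPentry := congr_fun hu'Pv (⟨0, hN⟩, j)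
      rw [hPdef, kron_one_mulVec] at hPentry
      have hz2 : ∑ k', Wc ⟨0, hN⟩ k' * u' (k', j) = z := by
        have : ∀ k', u' (k', j) = z := fun k' => congr_fun hz k'
        simp only [hWcdef, Matrix.of_apply, this]
        rw [← Finset.sum_mul, hnormc, one_mul]
      have hzz : z = 0 := by rw [← hz2]; exact hPentry
      have := congr_fun hz k
      simpa [hzz] using this
    · -- lam ≠ 0 : lam ∈ spectrum Lc, and μ ∈ spectrum (Ac - c lam BKc)
      have hlamspec : lam ∈ spectrum ℂ Lc := by
        have hgen : Module.End.HasGenEigenvalue g lam b := by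
          rw [Module.End.HasGenEigenvalue]
          refine Submodule.ne_bot_iff _ |>.mpr ⟨u', ?_, hu'0⟩
          rw [Module.End.mem_genEigenspace_nat, LinearMap.mem_ker]
          have h1 : Matrix.toLinAlgEquiv' ((Lk - lam • 1) ^ b) = (g - lam • 1) ^ b := by
            rw [map_pow, map_sub, ← Algebra.algebraMap_eq_smul_one, AlgEquiv.commutes,
              Algebra.algebraMap_eq_smul_one, hgdef]
          have h2 := congrArg (fun φ => φ u') h1
          simp only [Matrix.toLinAlgEquiv'_apply] at h2
          rw [← h2]
          exact hb0
        have heig : Module.End.HasEigenvalue g lam :=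
          Module.End.hasEigenvalue_of_hasGenEigenvalue hgen
        obtain ⟨z, hz⟩ := heig.exists_hasEigenvector
        obtain ⟨hzmem, hzne⟩ := hz
        rw [Module.End.mem_eigenspace_iff] at hzmem
        obtain ⟨⟨k0, j0⟩, hk0⟩ := Function.ne_iff.mp hzne
        have hcol : Lc *ᵥ (fun k => z (k, j0)) = lam • (fun k => z (k, j0)) := by
          funext i
          have h3 : (Lk *ᵥ z) (i, j0) = (lam • z) (i, j0) := by
            rw [show Lk *ᵥ z = lam • z from by
              simpa [hgdef, Matrix.toLinAlgEquiv'_apply] using hzmem]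
          rw [hLkdef, kron_one_mulVec] at h3
          simpa [Matrix.mulVec, dotProduct] using h3
        have hcne : (fun k => z (k, j0)) ≠ 0 := by
          intro h
          exact hk0 (by simpa using congr_fun h k0)
        have heigL : Module.End.HasEigenvalue (Matrix.toLinAlgEquiv' Lc) lam :=
          Module.End.hasEigenvalue_of_hasEigenvector
            ⟨Module.End.mem_eigenspace_iff.mpr (by
              rw [Matrix.toLinAlgEquiv'_apply]; exact hcol), hcne⟩
        have := Module.End.hasEigenvalue_iff_mem_spectrum.mp heigL
        rwa [AlgEquiv.spectrum_eq] at this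
      -- now μ ∈ spectrum (Ac - (c * lam) • BKc)
      have hμspec : μ ∈ spectrum ℂ (Ac - ((c : ℂ) * lam) • BKc) := by
        by_contra hnot
        have hunit : IsUnit ((algebraMap ℂ (Matrix (Fin n) (Fin n) ℂ)) μ
            - (Ac - ((c : ℂ) * lam) • BKc)) := spectrum.notMem_iff.mp hnot
        set Aμ : Matrix (Fin n) (Fin n) ℂ := (Ac - ((c : ℂ) * lam) • BKc) - μ • 1 with hAμdef
        have hAμunit : IsUnit Aμ := by
          have : Aμ = -((algebraMap ℂ (Matrix (Fin n) (Fin n) ℂ)) μ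
              - (Ac - ((c : ℂ) * lam) • BKc)) := by
            rw [Algebra.algebraMap_eq_smul_one, neg_sub, hAμdef]
          rw [this]
          exact hunit.neg
        set G : Matrix (Fin N × Fin n) (Fin N × Fin n) ℂ :=
          (Lc - lam • 1) ⊗ₖ (1 : Matrix (Fin n) (Fin n) ℂ) with hGdef
        have hcomLkMc : Commute Lk Mc := hLkM
        have hcomG : Commute G (Mc - μ • 1) := by
          rw [← hG]
          exact ((hcomLkMc.sub_left ((Commute.one_left Mc).smul_left lam)).sub_right
            (((Commute.one_right Lk).sub_left ((Commute.one_left _).smul_left lam)).smul_right μ))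
        have hG1Aμ : G * ((1 : Matrix (Fin N) (Fin N) ℂ) ⊗ₖ Aμ)
            = ((1 : Matrix (Fin N) (Fin N) ℂ) ⊗ₖ Aμ) * G := by
          rw [hGdef, ← Matrix.mul_kronecker_mul, ← Matrix.mul_kronecker_mul,
            Matrix.one_mul, Matrix.mul_one, Matrix.one_mul, Matrix.mul_one]
        have hsplit : Mc - μ • 1 = ((1 : Matrix (Fin N) (Fin N) ℂ) ⊗ₖ Aμ)
            + (-(c : ℂ)) • (((1 : Matrix (Fin N) (Fin N) ℂ) ⊗ₖ BKc) * G) := by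
          have hBKG : ((1 : Matrix (Fin N) (Fin N) ℂ) ⊗ₖ BKc) * G
              = Lc ⊗ₖ BKc - lam • ((1 : Matrix (Fin N) (Fin N) ℂ) ⊗ₖ BKc) := by
            rw [hGdef, ← Matrix.mul_kronecker_mul, Matrix.one_mul, Matrix.mul_one,
              sub_kron, Matrix.smul_kronecker]
          rw [hBKG, hMcdef, hAμdef, kron_sub, kron_sub, Matrix.kronecker_smul,
            Matrix.kronecker_smul, Matrix.one_kronecker_one]
          module
        have key : ∀ b' : ℕ, ∀ x : Fin N × Fin n → ℂ,
            (((Lc - lam • 1) ^ b') ⊗ₖ (1 : Matrix (Fin n) (Fin n) ℂ)) *ᵥ x = 0 →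
            ∀ a' : ℕ, ((Mc - μ • 1) ^ a') *ᵥ x = 0 → x = 0 := by
          intro b'
          induction b' with
          | zero =>
            intro x hx a' _
            simpa [Matrix.one_kronecker_one, Matrix.one_mulVec] using hx
          | succ b' ih =>
            intro x hx a' ha'
            have hx' : (((Lc - lam • 1) ^ b') ⊗ₖ (1 : Matrix (Fin n) (Fin n) ℂ)) *ᵥ
                (G *ᵥ x) = 0 := by
              rw [Matrix.mulVec_mulVec, hGdef, ← Matrix.mul_kronecker_mul,
                Matrix.one_mul, ← pow_succ]
              exact hx
            have ha'' : ((Mc - μ • 1) ^ a') *ᵥ (G *ᵥ x) = 0 := by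
              rw [Matrix.mulVec_mulVec, ← (hcomG.pow_right a').eq,
                ← Matrix.mulVec_mulVec, ha', Matrix.mulVec_zero]
            have hGx : G *ᵥ x = 0 := ih _ hx' a' ha''
            have hstep : ∀ z : Fin N × Fin n → ℂ, G *ᵥ z = 0 →
                (Mc - μ • 1) *ᵥ z = ((1 : Matrix (Fin N) (Fin N) ℂ) ⊗ₖ Aμ) *ᵥ z ∧
                G *ᵥ (((1 : Matrix (Fin N) (Fin N) ℂ) ⊗ₖ Aμ) *ᵥ z) = 0 := by
              intro z hz
              constructor
              · rw [hsplit, Matrix.add_mulVec, Matrix.smul_mulVec,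
                  ← Matrix.mulVec_mulVec, hz, Matrix.mulVec_zero, smul_zero, add_zero]
              · rw [Matrix.mulVec_mulVec, hG1Aμ, ← Matrix.mulVec_mulVec, hz,
                  Matrix.mulVec_zero]
            have hiter : ∀ a'' : ℕ,
                ((Mc - μ • 1) ^ a'') *ᵥ x = (((1 : Matrix (Fin N) (Fin N) ℂ) ⊗ₖ Aμ) ^ a'') *ᵥ x ∧
                G *ᵥ ((((1 : Matrix (Fin N) (Fin N) ℂ) ⊗ₖ Aμ) ^ a'') *ᵥ x) = 0 := by
              intro a''
              induction a'' with
              | zero => simpa [Matrix.one_mulVec] using hGx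
              | succ a'' ih2 =>
                obtain ⟨ih2a, ih2b⟩ := ih2
                constructor
                · rw [pow_succ', ← Matrix.mulVec_mulVec, ih2a, (hstep _ ih2b).1,
                    Matrix.mulVec_mulVec, ← pow_succ']
                · rw [pow_succ', ← Matrix.mulVec_mulVec]
                  exact (hstep _ ih2b).2
            have hfin : (((1 : Matrix (Fin N) (Fin N) ℂ) ⊗ₖ Aμ) ^ a') *ᵥ x = 0 := by
              rw [← (hiter a').1]
              exact ha'
            rw [kron_pow_right'] at hfin
            obtain ⟨uu, huu⟩ := hAμunit.pow a'
            have h2 : ((1 : Matrix (Fin N) (Fin N) ℂ) ⊗ₖ (↑uu⁻¹ : Matrix (Fin n) (Fin n) ℂ)) *ᵥ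
                (((1 : Matrix (Fin N) (Fin N) ℂ) ⊗ₖ (Aμ ^ a')) *ᵥ x) = x := by
              rw [Matrix.mulVec_mulVec, ← Matrix.mul_kronecker_mul, Matrix.one_mul,
                ← huu, Units.inv_mul, Matrix.one_kronecker_one, Matrix.one_mulVec]
            rw [hfin, Matrix.mulVec_zero] at h2
            exact h2.symm
        exact hu'0 (key b u' hb a ha)
      exact hH lam hlamspec hlam μ hμspec
  -- decompose y and conclude
  have hdecomp := Submodule.eq_iSup_inf_genEigenspace (p := pP) (f := f) ⊤ hInv htopf
  have hymem : y ∈ ⨆ μ, pP ⊓ (Module.End.genEigenspace f μ) ⊤ := by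
    rw [← hdecomp]
    exact hyP
  obtain ⟨mm, hmm, hmsum⟩ := (Submodule.mem_iSup_iff_exists_finsupp _ _).mp hymem
  have hrw : ∀ t : ℝ,
      NormedSpace.exp (t • Mc) *ᵥ y =
        ∑ μ ∈ mm.support, NormedSpace.exp (t • Mc) *ᵥ mm μ := by
    intro t
    rw [← hmsum, Finsupp.sum]
    exact map_sum ((NormedSpace.exp (t • Mc)).mulVecLin) _ _
  simp only [hrw]
  have hsum : Tendsto (fun t : ℝ => ∑ μ ∈ mm.support, NormedSpace.exp (t • Mc) *ᵥ mm μ)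
      atTop (nhds (∑ _μ ∈ mm.support, (0 : Fin N × Fin n → ℂ))) := by
    refine tendsto_finset_sum _ fun μ hμ => ?_
    have hmμ := hmm μ
    have hne : mm μ ≠ 0 := Finsupp.mem_support_iff.mp hμ
    have hre : μ.re < 0 := hloc μ (mm μ) hmμ hne
    obtain ⟨a, ha⟩ := genEig_matrix Mc μ (mm μ) (Submodule.mem_inf.mp hmμ).2
    exact auxTendsto Mc μ hre a (mm μ) ha
  simpa using hsum


end Stmt17Aux

open Stmt17Aux in
set_option maxHeartbeats 1000000 in
/-- Consensus: if `A − cλ_i BK` is Hurwitz for every nonzero eigenvalue `λ_i` of the Laplacian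
`L` of a graph with a spanning tree (`0` a simple eigenvalue, right eigenvector `1_N`,
normalized left eigenvector `w`), then every solution of `ẋ = (I_N ⊗ A − cL ⊗ BK)x` satisfies
`x(t) − (1_N wᵀ ⊗ e^{At})x(0) → 0` as `t → ∞`. -/
theorem stmt17 {N n m : ℕ}
    (A : Matrix (Fin n) (Fin n) ℝ) (B : Matrix (Fin n) (Fin m) ℝ) (K : Matrix (Fin m) (Fin n) ℝ)
    (c : ℝ) (hc : 0 < c)
    (L : Matrix (Fin N) (Fin N) ℝ)
    (hrow : L *ᵥ (fun _ => (1 : ℝ)) = 0)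
    (hrank : L.rank = N - 1)
    (w : Fin N → ℝ) (hw : w ᵥ* L = 0) (hnorm : ∑ i, w i = 1)
    (hHurwitz : ∀ μ ∈ spectrum ℂ (L.map (Complex.ofReal ·)), μ ≠ 0 →
      ∀ z ∈ spectrum ℂ
          ((A.map (Complex.ofReal ·)) - ((c : ℂ) * μ) • ((B * K).map (Complex.ofReal ·))),
        z.re < 0)
    (x0 : Fin N × Fin n → ℝ) :
    Tendsto
      (fun t : ℝ =>
        (NormedSpace.exp
            (t • ((1 : Matrix (Fin N) (Fin N) ℝ) ⊗ₖ A - c • (L ⊗ₖ (B * K))))) *ᵥ x0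
          - ((Matrix.of fun (_ : Fin N) (j : Fin N) => w j) ⊗ₖ NormedSpace.exp (t • A)) *ᵥ x0)
      atTop (nhds 0) := by
  rcases Nat.eq_zero_or_pos N with hN0 | hN
  · subst hN0
    haveI : Subsingleton (Fin 0 × Fin n → ℝ) := ⟨fun a b => funext fun x => x.1.elim0⟩
    have h0 : ∀ t : ℝ,
        (NormedSpace.exp
            (t • ((1 : Matrix (Fin 0) (Fin 0) ℝ) ⊗ₖ A - c • (L ⊗ₖ (B * K))))) *ᵥ x0
          - ((Matrix.of fun (_ : Fin 0) (j : Fin 0) => w j) ⊗ₖ NormedSpace.exp (t • A)) *ᵥ x0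
          = 0 := fun t => Subsingleton.elim _ _
    simp only [h0]
    exact tendsto_const_nhds
  -- notation
  set W : Matrix (Fin N) (Fin N) ℝ := Matrix.of fun _ j => w j with hWdef
  set Mr : Matrix (Fin N × Fin n) (Fin N × Fin n) ℝ :=
    (1 : Matrix (Fin N) (Fin N) ℝ) ⊗ₖ A - c • (L ⊗ₖ (B * K)) with hMrdef
  set Pr : Matrix (Fin N × Fin n) (Fin N × Fin n) ℝ :=
    W ⊗ₖ (1 : Matrix (Fin n) (Fin n) ℝ) with hPrdef
  set y0 : Fin N × Fin n → ℝ := x0 - Pr *ᵥ x0 with hy0def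
  -- real matrix identities
  have hLW : L * W = 0 := by
    ext i j
    have := congr_fun hrow i
    simp only [Matrix.mulVec, dotProduct, mul_one] at this
    simp [Matrix.mul_apply, hWdef, ← Finset.sum_mul, this]
  have hWW : W * W = W := by
    ext i j
    simp [Matrix.mul_apply, hWdef, ← Finset.sum_mul, hnorm]
  have hPP : Pr * Pr = Pr := by
    rw [hPrdef, ← Matrix.mul_kronecker_mul, hWW, Matrix.one_mul]
  have hPy0 : Pr *ᵥ y0 = 0 := by
    rw [hy0def, mulVec_sub', Matrix.mulVec_mulVec, hPP, sub_self]
  -- structural identity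
  have hstruct : ∀ t : ℝ,
      (NormedSpace.exp (t • Mr)) *ᵥ x0
          - (W ⊗ₖ NormedSpace.exp (t • A)) *ᵥ x0
        = NormedSpace.exp (t • Mr) *ᵥ y0 := by
    intro t
    rw [← expMul_kron A (B * K) c L W hLW t, ← hMrdef, ← Matrix.mulVec_mulVec, hy0def,
      mulVec_sub', hPrdef]
  -- complex data
  set Lc : Matrix (Fin N) (Fin N) ℂ := L.map (Complex.ofReal ·) with hLcdef
  set Ac : Matrix (Fin n) (Fin n) ℂ := A.map (Complex.ofReal ·) with hAcdef
  set BKc : Matrix (Fin n) (Fin n) ℂ := (B * K).map (Complex.ofReal ·) with hBKcdef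
  set wc : Fin N → ℂ := fun j => ((w j : ℝ) : ℂ) with hwcdef
  set Mc : Matrix (Fin N × Fin n) (Fin N × Fin n) ℂ :=
    (1 : Matrix (Fin N) (Fin N) ℂ) ⊗ₖ Ac - (c : ℂ) • (Lc ⊗ₖ BKc) with hMcdef
  set y0c : Fin N × Fin n → ℂ := fun i => ((y0 i : ℝ) : ℂ) with hy0cdef
  have hrowc : Lc *ᵥ (fun _ => (1 : ℂ)) = 0 := by
    funext i
    have h := congr_fun hrow i
    simp only [Matrix.mulVec, dotProduct, mul_one, Pi.zero_apply] at h ⊢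
    simp only [hLcdef, Matrix.map_apply]
    have hcast : (∑ k, ((L i k : ℝ) : ℂ)) = ((∑ k, L i k : ℝ) : ℂ) := by
      push_cast; rfl
    rw [hcast, h, Complex.ofReal_zero]
  have hwc : wc ᵥ* Lc = 0 := by
    funext j
    have h := congr_fun hw j
    simp only [Matrix.vecMul, dotProduct, Pi.zero_apply] at h ⊢
    simp only [hLcdef, hwcdef, Matrix.map_apply]
    have hcast : (∑ k, ((w k : ℝ) : ℂ) * ((L k j : ℝ) : ℂ))
        = ((∑ k, w k * L k j : ℝ) : ℂ) := by push_cast; rfl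
    rw [hcast, h, Complex.ofReal_zero]
  have hnormc : ∑ i, wc i = 1 := by
    rw [hwcdef, ← Complex.ofReal_sum, hnorm, Complex.ofReal_one]
  -- real kernel description
  have hkerR : ∀ v : Fin N → ℝ, L *ᵥ v = 0 → ∃ a : ℝ, v = fun _ => a := by
    have hone : (fun _ => (1 : ℝ)) ∈ LinearMap.ker L.mulVecLin := by
      rw [LinearMap.mem_ker, Matrix.mulVecLin_apply]; exact hrow
    have hone0 : (fun _ => (1 : ℝ)) ≠ (0 : Fin N → ℝ) := by
      intro h; exact one_ne_zero (congr_fun h ⟨0, hN⟩)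
    have hspan_le : Submodule.span ℝ {(fun _ => (1 : ℝ))} ≤ LinearMap.ker L.mulVecLin :=
      (Submodule.span_singleton_le_iff_mem _ _).mpr hone
    have hdim : Module.finrank ℝ (LinearMap.ker L.mulVecLin) = 1 := by
      have hrn := LinearMap.finrank_range_add_finrank_ker L.mulVecLin
      rw [Module.finrank_fin_fun] at hrn
      have hr : Module.finrank ℝ (LinearMap.range L.mulVecLin) = N - 1 := hrank
      omega
    have hspan_eq : Submodule.span ℝ {(fun _ => (1 : ℝ))} = LinearMap.ker L.mulVecLin :=
      Submodule.eq_of_le_of_finrank_le hspan_le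
        (by rw [hdim, finrank_span_singleton hone0])
    intro v hv
    have hvk : v ∈ Submodule.span ℝ {(fun _ => (1 : ℝ))} := by
      rw [hspan_eq, LinearMap.mem_ker, Matrix.mulVecLin_apply]; exact hv
    obtain ⟨a, ha⟩ := Submodule.mem_span_singleton.mp hvk
    refine ⟨a, ?_⟩
    rw [← ha]
    funext i
    simp
  -- complex kernel description
  have hkerC : ∀ v : Fin N → ℂ, Lc *ᵥ v = 0 → ∃ z : ℂ, v = fun _ => z := by
    intro v hv
    have hre : L *ᵥ (fun i => (v i).re) = 0 := by
      funext j
      have hj := congr_fun hv j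
      simp only [Matrix.mulVec, dotProduct, Pi.zero_apply, hLcdef, Matrix.map_apply] at hj
      have := congrArg Complex.re hj
      rw [Complex.re_sum] at this
      simpa [Complex.mul_re, Matrix.mulVec, dotProduct] using this
    have him : L *ᵥ (fun i => (v i).im) = 0 := by
      funext j
      have hj := congr_fun hv j
      simp only [Matrix.mulVec, dotProduct, Pi.zero_apply, hLcdef, Matrix.map_apply] at hj
      have := congrArg Complex.im hj
      rw [Complex.im_sum] at this
      simpa [Complex.mul_im, Matrix.mulVec, dotProduct] using this
    obtain ⟨a, ha⟩ := hkerR _ hre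
    obtain ⟨b, hb⟩ := hkerR _ him
    refine ⟨Complex.mk a b, ?_⟩
    funext i
    have h1 : (v i).re = a := congr_fun ha i
    have h2 : (v i).im = b := congr_fun hb i
    exact Complex.ext h1 h2
  -- initial condition in the kernel of P (complexified)
  have hy0cP : ((Matrix.of fun (_ : Fin N) (j : Fin N) => wc j) ⊗ₖ
      (1 : Matrix (Fin n) (Fin n) ℂ)) *ᵥ y0c = 0 := by
    funext ij
    obtain ⟨i, j⟩ := ij
    have h0 := congr_fun hPy0 (i, j)
    rw [hPrdef, kron_one_mulVec] at h0
    rw [kron_one_mulVec]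
    simp only [Pi.zero_apply] at h0 ⊢
    simp only [hy0cdef, hwcdef, hWdef, Matrix.of_apply] at h0 ⊢
    have hcast : (∑ k, ((w k : ℝ) : ℂ) * ((y0 (k, j) : ℝ) : ℂ))
        = ((∑ k, w k * y0 (k, j) : ℝ) : ℂ) := by push_cast; rfl
    rw [hcast, h0, Complex.ofReal_zero]
  -- exponential commutes with complexification
  have hMmap : Mr.map (Complex.ofReal ·) = Mc := by
    ext ⟨i, j⟩ ⟨k, l⟩
    rw [hMrdef, hMcdef, hAcdef, hLcdef, hBKcdef]
    simp only [Matrix.map_apply, Matrix.sub_apply, Matrix.smul_apply,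
      Matrix.kroneckerMap_apply, Matrix.one_apply, smul_eq_mul]
    push_cast [apply_ite (Complex.ofReal ·)]
    ring
  have hmapexp : ∀ t : ℝ,
      (NormedSpace.exp (t • Mr)).map (Complex.ofReal ·) = NormedSpace.exp (t • Mc) := by
    intro t
    letI : SeminormedRing (Matrix (Fin N × Fin n) (Fin N × Fin n) ℝ) :=
      Matrix.linftyOpSemiNormedRing
    letI : NormedRing (Matrix (Fin N × Fin n) (Fin N × Fin n) ℝ) := Matrix.linftyOpNormedRing
    letI : NormedAlgebra ℝ (Matrix (Fin N × Fin n) (Fin N × Fin n) ℝ) :=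
      Matrix.linftyOpNormedAlgebra
    letI : SeminormedRing (Matrix (Fin N × Fin n) (Fin N × Fin n) ℂ) :=
      Matrix.linftyOpSemiNormedRing
    letI : NormedRing (Matrix (Fin N × Fin n) (Fin N × Fin n) ℂ) := Matrix.linftyOpNormedRing
    letI : NormedAlgebra ℝ (Matrix (Fin N × Fin n) (Fin N × Fin n) ℂ) :=
      Matrix.linftyOpNormedAlgebra
    have hcont : Continuous (Complex.ofRealHom.mapMatrix :
        Matrix (Fin N × Fin n) (Fin N × Fin n) ℝ →+* Matrix (Fin N × Fin n) (Fin N × Fin n) ℂ) := by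
      show Continuous fun X : Matrix (Fin N × Fin n) (Fin N × Fin n) ℝ =>
        X.map (⇑Complex.ofRealHom)
      exact continuous_id.matrix_map Complex.continuous_ofReal
    letI : NormedAlgebra ℚ (Matrix (Fin N × Fin n) (Fin N × Fin n) ℝ) :=
      Matrix.linftyOpNormedAlgebra
    have h1 := NormedSpace.map_exp
      (Complex.ofRealHom.mapMatrix :
        Matrix (Fin N × Fin n) (Fin N × Fin n) ℝ →+* Matrix (Fin N × Fin n) (Fin N × Fin n) ℂ)
      hcont (t • Mr)
    rw [RingHom.mapMatrix_apply, RingHom.mapMatrix_apply] at h1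
    have h2 : (t • Mr).map (Complex.ofRealHom) = t • Mc := by
      rw [← hMmap]
      ext ij kl
      simp [Matrix.map_apply, Complex.real_smul]
    rw [← h2]
    exact h1
  -- apply the complex main lemma
  have hmain := mainComplex hN Ac BKc c Lc wc hrowc hwc hnormc hkerC
    (by
      intro μ hμ hμ0 z hz
      exact hHurwitz μ (by rwa [hLcdef] at hμ) hμ0 z
        (by rwa [hAcdef, hBKcdef] at hz))
    y0c hy0cP
  rw [← hMcdef] at hmain
  -- transfer to the real statement
  have hentry : ∀ (t : ℝ) (i : Fin N × Fin n),
      (NormedSpace.exp (t • Mr) *ᵥ y0) i = ((NormedSpace.exp (t • Mc) *ᵥ y0c) i).re := by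
    intro t i
    have h1 : (((NormedSpace.exp (t • Mr)).map (Complex.ofReal ·)) *ᵥ y0c) i
        = (((NormedSpace.exp (t • Mr) *ᵥ y0) i : ℝ) : ℂ) := by
      simp only [Matrix.mulVec, dotProduct, Matrix.map_apply, hy0cdef]
      push_cast
      rfl
    rw [← hmapexp t, h1, Complex.ofReal_re]
  rw [tendsto_pi_nhds]
  intro i
  have hci : Tendsto (fun t : ℝ => (NormedSpace.exp (t • Mc) *ᵥ y0c) i) atTop (nhds 0) := by
    have := tendsto_pi_nhds.mp hmain i
    simpa using this
  have hre : Tendsto (fun t : ℝ => ((NormedSpace.exp (t • Mc) *ᵥ y0c) i).re)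
      atTop (nhds 0) := by
    have := (Complex.continuous_re.tendsto 0).comp hci
    simpa [Function.comp_def] using this
  refine Tendsto.congr (fun t => ?_) (by simpa using hre)
  rw [← hentry t i, ← hstruct t]
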